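/- Let G be a finite simple graph, let S ⊆ V(G), and let T, Z ⊆ V(G) \ S, and suppose S and T admit a left-restricted (S,T)-separator. If there is no vertex v ∈ Z such that λ^L_G(S, T ∪ {v}) > λ^L_G(S,T), then λ^L_G(S,T) = λ^L_G(S, T ∪ Z). -/

import Mathlib

open SimpleGraph

/-- `u` can reach `v` in `G` by a walk whose support stays inside `A`. -/
def ReachIn {V : Type} (G : SimpleGraph V) (A : Set V) (u v : V) : Prop :=
  ∃ w : G.Walk u v, ∀ x ∈ w.support, x ∈ A

/-- The set of vertices reachable in `G − P` from a vertex of `S \ P`. -/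
def reachSet {V : Type} (G : SimpleGraph V) (S P : Set V) : Set V :=
  {v | ∃ s ∈ S \ P, ReachIn G Pᶜ s v}

/-- `P` is an unrestricted `(S,T)`-separator: no vertex of `S \ P` reaches a
vertex of `T \ P` in `G − P`. -/
def IsSep {V : Type} (G : SimpleGraph V) (S T P : Set V) : Prop :=
  ∀ s ∈ S \ P, ∀ t ∈ T \ P, ¬ ReachIn G Pᶜ s t

/-- A left-restricted `(S,T)`-separator additionally avoids `S`. -/
def IsLeftSep {V : Type} (G : SimpleGraph V) (S T P : Set V) : Prop :=
  IsSep G S T P ∧ P ∩ S = ∅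

/-- A minimum-size left-restricted `(S,T)`-separator. -/
def IsMinLeftSep {V : Type} (G : SimpleGraph V) (S T P : Set V) : Prop :=
  IsLeftSep G S T P ∧ ∀ Q : Set V, IsLeftSep G S T Q → P.ncard ≤ Q.ncard

/-- `λ^L_G(S,T)`: the minimum size of a left-restricted `(S,T)`-separator,
`⊤` (i.e. `+∞`) if none exists. -/
noncomputable def lamL {V : Type} (G : SimpleGraph V) (S T : Set V) : ℕ∞ :=
  ⨅ (P : Set V) (_ : IsLeftSep G S T P), (P.ncard : ℕ∞)

namespace StmtAux

variable {V : Type} (G : SimpleGraph V)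

/-- vertex boundary of `R`: vertices outside `R` adjacent to `R`. -/
def nbd (R : Set V) : Set V := {x | x ∉ R ∧ ∃ u ∈ R, G.Adj u x}

lemma walk_stays {R : Set V} {s t : V} (w : G.Walk s t) (hs : s ∈ R)
    (h : ∀ x ∈ w.support, x ∉ nbd G R) : ∀ x ∈ w.support, x ∈ R := by
  induction w with
  | nil => intro x hx; simp only [Walk.support_nil, List.mem_singleton] at hx; subst hx; exact hs
  | @cons a b c ha p ih =>
    intro x hx
    have hb : b ∈ R := by
      by_contra hb
      exact h b (by simp) ⟨hb, a, hs, ha⟩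
    rcases (by simpa using hx : x = a ∨ x ∈ p.support) with h1 | h2
    · subst h1; exact hs
    · exact ih hb (fun y hy => h y (by simp [hy])) x h2

lemma nbd_leftSep {S T R : Set V} (hS : S ⊆ R) (hT : R ∩ T = ∅) :
    IsLeftSep G S T (nbd G R) := by
  constructor
  · rintro s hs t ht ⟨w, hw⟩
    have hall := walk_stays G w (hS hs.1) (fun x hx => hw x hx)
    have htR : t ∈ R := hall t w.end_mem_support
    exact absurd (Set.mem_inter htR ht.1) (by simp [hT])
  · ext x
    simp only [Set.mem_inter_iff, Set.mem_empty_iff_false, iff_false, not_and]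
    rintro ⟨hx, -⟩ hxS
    exact hx (hS hxS)

lemma reach_closed {S P : Set V} {u x : V} (hu : u ∈ reachSet G S P)
    (ha : G.Adj u x) (hx : x ∉ P) : x ∈ reachSet G S P := by
  obtain ⟨s, hs, w, hw⟩ := hu
  refine ⟨s, hs, w.concat ha, ?_⟩
  intro y hy
  rw [Walk.support_concat, List.mem_append] at hy
  rcases hy with hy | hy
  · exact hw y hy
  · simp only [List.mem_singleton] at hy; subst hy; exact hx

lemma nbd_reach_subset {S P : Set V} : nbd G (reachSet G S P) ⊆ P := by
  rintro x ⟨hx, u, hu, ha⟩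
  by_contra hxP
  exact hx (reach_closed G hu ha hxP)

lemma subset_reach {S P : Set V} (hP : P ∩ S = ∅) : S ⊆ reachSet G S P := by
  intro s hs
  have hsP : s ∉ P := fun h => by simp [Set.eq_empty_iff_forall_notMem] at hP; exact hP s h hs
  exact ⟨s, ⟨hs, hsP⟩, Walk.nil, by simpa using hsP⟩

lemma reach_compl {S P : Set V} : reachSet G S P ⊆ Pᶜ := by
  rintro v ⟨s, hs, w, hw⟩
  exact hw v w.end_mem_support

lemma reach_inter_empty {S T P : Set V} (h : IsLeftSep G S T P) :
    reachSet G S P ∩ T = ∅ := by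
  ext v
  simp only [Set.mem_inter_iff, Set.mem_empty_iff_false, iff_false, not_and]
  rintro ⟨s, hs, hr⟩ hvT
  exact h.1 s hs v ⟨hvT, reach_compl G ⟨s, hs, hr⟩⟩ hr

lemma reach_nbd_subset {S R : Set V} (hS : S ⊆ R) : reachSet G S (nbd G R) ⊆ R := by
  rintro v ⟨s, hs, w, hw⟩
  exact walk_stays G w (hS hs.1) (fun x hx => hw x hx) v w.end_mem_support

lemma nbd_submod [Fintype V] (A B : Set V) :
    (nbd G (A ∩ B)).ncard + (nbd G (A ∪ B)).ncard
      ≤ (nbd G A).ncard + (nbd G B).ncard := by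
  have h1 : nbd G (A ∩ B) ∪ nbd G (A ∪ B) ⊆ nbd G A ∪ nbd G B := by
    rintro x (⟨hx, u, hu, ha⟩ | ⟨hx, u, hu, ha⟩)
    · by_cases hxA : x ∈ A
      · exact Or.inr ⟨fun hB => hx ⟨hxA, hB⟩, u, hu.2, ha⟩
      · exact Or.inl ⟨hxA, u, hu.1, ha⟩
    · rcases hu with hu | hu
      · exact Or.inl ⟨fun h => hx (Or.inl h), u, hu, ha⟩
      · exact Or.inr ⟨fun h => hx (Or.inr h), u, hu, ha⟩
  have h2 : nbd G (A ∩ B) ∩ nbd G (A ∪ B) ⊆ nbd G A ∩ nbd G B := by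
    rintro x ⟨⟨-, u, hu, ha⟩, ⟨hx, -⟩⟩
    exact ⟨⟨fun h => hx (Or.inl h), u, hu.1, ha⟩, ⟨fun h => hx (Or.inr h), u, hu.2, ha⟩⟩
  calc (nbd G (A ∩ B)).ncard + (nbd G (A ∪ B)).ncard
      = (nbd G (A ∩ B) ∪ nbd G (A ∪ B)).ncard + (nbd G (A ∩ B) ∩ nbd G (A ∪ B)).ncard := by
        rw [Set.ncard_union_add_ncard_inter]
    _ ≤ (nbd G A ∪ nbd G B).ncard + (nbd G A ∩ nbd G B).ncard :=
        add_le_add (Set.ncard_le_ncard h1 (Set.toFinite _)) (Set.ncard_le_ncard h2 (Set.toFinite _))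
    _ = (nbd G A).ncard + (nbd G B).ncard := by rw [Set.ncard_union_add_ncard_inter]

lemma lamL_eq_ncard {S T P : Set V} (h : IsMinLeftSep G S T P) :
    lamL G S T = (P.ncard : ℕ∞) := by
  apply le_antisymm
  · exact iInf₂_le P h.1
  · exact le_iInf₂ fun Q hQ => Nat.cast_le.mpr (h.2 Q hQ)

lemma exists_min {S T : Set V} (hex : ∃ P, IsLeftSep G S T P) :
    ∃ P, IsMinLeftSep G S T P := by
  have hne : {n | ∃ P, IsLeftSep G S T P ∧ P.ncard = n}.Nonempty :=
    ⟨_, hex.choose, hex.choose_spec, rfl⟩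
  obtain ⟨P, hP, hcard⟩ := Nat.sInf_mem hne
  exact ⟨P, hP, fun Q hQ => hcard ▸ Nat.sInf_le ⟨Q, hQ, rfl⟩⟩

lemma leftSep_anti {S T T' P : Set V} (h : T ⊆ T') (hP : IsLeftSep G S T' P) :
    IsLeftSep G S T P :=
  ⟨fun s hs t ht => hP.1 s hs t ⟨h ht.1, ht.2⟩, hP.2⟩

lemma lamL_mono {S T T' : Set V} (h : T ⊆ T') : lamL G S T ≤ lamL G S T' :=
  le_iInf₂ fun P hP => iInf₂_le P (leftSep_anti G h hP)

end StmtAux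

open StmtAux


/-- If no single vertex of `Z` increases `λ^L(S,T)` when added to `T`,
then `λ^L(S,T) = λ^L(S, T ∪ Z)`. -/
theorem stmt7 {V : Type} [Fintype V] (G : SimpleGraph V) (S T Z : Set V)
    (hT : T ⊆ Sᶜ) (hZ : Z ⊆ Sᶜ)
    (hex : ∃ P : Set V, IsLeftSep G S T P)
    (hno : ¬ ∃ v ∈ Z, lamL G S T < lamL G S (T ∪ {v})) :
    lamL G S T = lamL G S (T ∪ Z) := by
  push_neg at hno
  obtain ⟨P₀, hP₀⟩ := exists_min G hex
  -- choose a minimum separator with smallest reach set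
  have hks : {k | ∃ Q, IsMinLeftSep G S T Q ∧ (reachSet G S Q).ncard = k}.Nonempty :=
    ⟨_, P₀, hP₀, rfl⟩
  obtain ⟨P, hPmin, hPk⟩ := Nat.sInf_mem hks
  have hlamT : lamL G S T = (P.ncard : ℕ∞) := lamL_eq_ncard G hPmin
  have key : ∀ v ∈ Z, v ∉ reachSet G S P := by
    intro v hv hvP
    have h1 : lamL G S (T ∪ {v}) ≤ lamL G S T := hno v hv
    have hexQ : ∃ Q, IsLeftSep G S (T ∪ {v}) Q := by
      by_contra hc
      push_neg at hc
      have htop : lamL G S (T ∪ {v}) = ⊤ :=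
        top_unique (le_iInf₂ fun Q hQ => absurd hQ (hc Q))
      rw [htop, top_le_iff, hlamT] at h1
      exact (ENat.coe_ne_top _) h1
    obtain ⟨Q, hQmin⟩ := exists_min G hexQ
    have hQT : IsLeftSep G S T Q := leftSep_anti G Set.subset_union_left hQmin.1
    have hQcard : Q.ncard = P.ncard := by
      have h2 : lamL G S T ≤ lamL G S (T ∪ {v}) := lamL_mono G Set.subset_union_left
      have := lamL_eq_ncard G hQmin
      have : (Q.ncard : ℕ∞) = (P.ncard : ℕ∞) := by
        rw [← this, ← hlamT]; exact le_antisymm h1 h2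
      exact_mod_cast this
    set A := reachSet G S P with hA
    set B := reachSet G S Q with hB
    have hSA : S ⊆ A := subset_reach G hPmin.1.2
    have hSB : S ⊆ B := subset_reach G hQmin.1.2
    have hAT : A ∩ T = ∅ := reach_inter_empty G hPmin.1
    have hBTv : B ∩ (T ∪ {v}) = ∅ := reach_inter_empty G hQmin.1
    have hBT : B ∩ T = ∅ := by
      rw [Set.eq_empty_iff_forall_notMem] at hBTv ⊢
      exact fun x ⟨h1, h2⟩ => hBTv x ⟨h1, Or.inl h2⟩
    have hvB : v ∉ B := by
      intro h
      rw [Set.eq_empty_iff_forall_notMem] at hBTv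
      exact hBTv v ⟨h, Or.inr rfl⟩
    -- the intersection and union boundary separators
    have hCsep : IsLeftSep G S T (nbd G (A ∩ B)) :=
      nbd_leftSep G (Set.subset_inter hSA hSB) (by
        rw [Set.eq_empty_iff_forall_notMem] at hAT ⊢
        exact fun x ⟨⟨h1, _⟩, h2⟩ => hAT x ⟨h1, h2⟩)
    have hDsep : IsLeftSep G S T (nbd G (A ∪ B)) :=
      nbd_leftSep G (hSA.trans Set.subset_union_left) (by
        rw [Set.eq_empty_iff_forall_notMem] at hAT hBT ⊢
        rintro x ⟨h1 | h1, h2⟩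
        · exact hAT x ⟨h1, h2⟩
        · exact hBT x ⟨h1, h2⟩)
    have hCge : P.ncard ≤ (nbd G (A ∩ B)).ncard := hPmin.2 _ hCsep
    have hDge : P.ncard ≤ (nbd G (A ∪ B)).ncard := hPmin.2 _ hDsep
    have hNA : nbd G A ⊆ P := nbd_reach_subset G
    have hNB : nbd G B ⊆ Q := nbd_reach_subset G
    have hsub : (nbd G (A ∩ B)).ncard + (nbd G (A ∪ B)).ncard ≤ P.ncard + Q.ncard :=
      (nbd_submod G A B).trans (add_le_add
        (Set.ncard_le_ncard hNA (Set.toFinite _))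
        (Set.ncard_le_ncard hNB (Set.toFinite _)))
    have hCeq : (nbd G (A ∩ B)).ncard = P.ncard := by omega
    have hCmin : IsMinLeftSep G S T (nbd G (A ∩ B)) :=
      ⟨hCsep, fun R hR => hCeq ▸ hPmin.2 R hR⟩
    -- its reach set is strictly smaller than that of P
    have hreach : reachSet G S (nbd G (A ∩ B)) ⊆ A ∩ B :=
      reach_nbd_subset G (Set.subset_inter hSA hSB)
    have hlt : (reachSet G S (nbd G (A ∩ B))).ncard < A.ncard := by
      apply Set.ncard_lt_ncard _ (Set.toFinite _)
      constructor
      · exact hreach.trans Set.inter_subset_left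
      · intro hAsub
        exact hvB (hreach (hAsub hvP)).2
    have : sInf {k | ∃ Q, IsMinLeftSep G S T Q ∧ (reachSet G S Q).ncard = k}
        ≤ (reachSet G S (nbd G (A ∩ B))).ncard := Nat.sInf_le ⟨_, hCmin, rfl⟩
    omega
  -- P separates S from T ∪ Z as well
  have hPZ : IsLeftSep G S (T ∪ Z) P := by
    refine ⟨?_, hPmin.1.2⟩
    rintro s hs t ⟨htTZ, htP⟩ hr
    rcases htTZ with ht | ht
    · exact hPmin.1.1 s hs t ⟨ht, htP⟩ hr
    · exact key t ht ⟨s, hs, hr⟩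
  apply le_antisymm
  · exact lamL_mono G Set.subset_union_left
  · rw [hlamT]
    exact iInf₂_le P hPZ
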